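/- Let β > 0, n an odd positive integer, ρ = √3/e, and αₙ the volume of the unit ball in ℝⁿ. For any positive even integer l, ∫_{ℝⁿ} |ξ|^l · (π/β)^{n/2} e^{-|ξ|²/(4β)} dξ ≤ π^{(n+1)/2}·n·αₙ·2^{(l+n+2)/2}·ρ^{(l+n-1)/2}·β^{l/2}·(l+n-1)^{(l+n-3)/2}·(2 + 1/e). -/

import Mathlib

open Real MeasureTheory

lemma cube_le_aux (m : ℕ) : m ^ 3 ≤ 4 * 3 ^ m := by
  induction m with
  | zero => norm_num
  | succ k ih =>
    rcases lt_or_ge k 3 with h | h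
    · interval_cases k <;> norm_num
    · have e : (k+1)^3 = k^3 + (3*k^2 + (3*k+1)) := by ring
      have h1 : 3*k^2 ≤ k^3 := by
        calc 3*k^2 ≤ k*k^2 := Nat.mul_le_mul_right _ h
          _ = k^3 := by ring
      have h2 : 3*k+1 ≤ k^3 := by nlinarith
      calc (k+1)^3 ≤ 3 * k^3 := by linarith
        _ ≤ 3 * (4 * 3^k) := Nat.mul_le_mul_left _ ih
        _ = 4 * 3^(k+1) := by ring

lemma gamma_half_le (m : ℕ) (hm : 1 ≤ m) :
    Real.Gamma ((m:ℝ) + 1/2) ≤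
      Real.sqrt (2*π) * (2 + 1/Real.exp 1) * Real.sqrt 3 ^ m * (m:ℝ) ^ (m-1) / Real.exp 1 ^ m := by
  have hm0 : (0:ℝ) < m := by exact_mod_cast hm
  have hG1 : (0:ℝ) < Real.Gamma ((m:ℝ)+1) := Real.Gamma_pos_of_pos (by linarith)
  -- Step 1 : Gamma (m+1/2) ≤ m !
  have step1 : Real.Gamma ((m:ℝ) + 1/2) ≤ (Nat.factorial m : ℝ) := by
    have hconv := Real.Gamma_mul_add_mul_le_rpow_Gamma_mul_rpow_Gamma
      (s := (m:ℝ)) (t := (m:ℝ)+1) hm0 (by linarith) one_half_pos one_half_pos (by norm_num)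
    have harg : (1/2:ℝ) * (m:ℝ) + (1/2) * ((m:ℝ)+1) = (m:ℝ) + 1/2 := by ring
    rw [harg] at hconv
    have hGm : Real.Gamma (m:ℝ) ≤ Real.Gamma ((m:ℝ)+1) := by
      rw [Real.Gamma_add_one (ne_of_gt hm0)]
      have h0 := (Real.Gamma_pos_of_pos hm0).le
      nlinarith [mul_nonneg (sub_nonneg.mpr (show (1:ℝ) ≤ m by exact_mod_cast hm)) h0]
    have h2 : Real.Gamma ((m:ℝ)) ^ ((1:ℝ)/2) * Real.Gamma ((m:ℝ)+1) ^ ((1:ℝ)/2)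
        ≤ Real.Gamma ((m:ℝ)+1) ^ ((1:ℝ)/2) * Real.Gamma ((m:ℝ)+1) ^ ((1:ℝ)/2) := by
      have := Real.rpow_le_rpow (Real.Gamma_pos_of_pos hm0).le hGm (by norm_num : (0:ℝ) ≤ 1/2)
      exact mul_le_mul_of_nonneg_right this (Real.rpow_nonneg hG1.le _)
    have h3 : Real.Gamma ((m:ℝ)+1) ^ ((1:ℝ)/2) * Real.Gamma ((m:ℝ)+1) ^ ((1:ℝ)/2)
        = Real.Gamma ((m:ℝ)+1) := by
      rw [← Real.rpow_add hG1]; norm_num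
    have h4 : Real.Gamma ((m:ℝ)+1) = (Nat.factorial m : ℝ) := Real.Gamma_nat_eq_factorial m
    calc Real.Gamma ((m:ℝ)+1/2) ≤ _ := hconv
      _ ≤ _ := h2
      _ = (Nat.factorial m : ℝ) := by rw [h3, h4]
  -- Step 2 : Stirling bound m ! ≤ e √m (m/e)^m
  have hsqm : (0:ℝ) ≤ Real.sqrt m := Real.sqrt_nonneg _
  have step2 : (Nat.factorial m : ℝ) ≤ Real.exp 1 * Real.sqrt m * ((m:ℝ)/Real.exp 1) ^ m := by
    have hst : Stirling.stirlingSeq m ≤ Real.exp 1 / Real.sqrt 2 := by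
      rw [← Stirling.stirlingSeq_one]
      have h := Stirling.stirlingSeq'_antitone (Nat.zero_le (m-1))
      simpa [Function.comp, Nat.succ_eq_add_one, Nat.sub_add_cancel hm] using h
    have hd : (0:ℝ) < Real.sqrt (2*m) * ((m:ℝ)/Real.exp 1) ^ m := by positivity
    have hfac : (Nat.factorial m : ℝ) = Stirling.stirlingSeq m * (Real.sqrt (2*m) * ((m:ℝ)/Real.exp 1) ^ m) := by
      rw [Stirling.stirlingSeq]; field_simp
    rw [hfac]
    calc Stirling.stirlingSeq m * (Real.sqrt (2*m) * ((m:ℝ)/Real.exp 1) ^ m)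
        ≤ (Real.exp 1 / Real.sqrt 2) * (Real.sqrt (2*m) * ((m:ℝ)/Real.exp 1) ^ m) :=
          mul_le_mul_of_nonneg_right hst hd.le
      _ = Real.exp 1 * Real.sqrt m * ((m:ℝ)/Real.exp 1) ^ m := by
          rw [Real.sqrt_mul (by norm_num : (0:ℝ) ≤ 2)]
          have h2 : (0:ℝ) < Real.sqrt 2 := by positivity
          field_simp
  -- Step 3 : numeric/growth bound
  have step3 : Real.exp 1 * Real.sqrt m * ((m:ℝ)/Real.exp 1) ^ m ≤
      Real.sqrt (2*π) * (2 + 1/Real.exp 1) * Real.sqrt 3 ^ m * (m:ℝ) ^ (m-1) / Real.exp 1 ^ m := by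
    have he : (0:ℝ) < Real.exp 1 := Real.exp_pos 1
    have hkey : Real.exp 1 * Real.sqrt m * (m:ℝ) ≤
        Real.sqrt (2*π) * (2 + 1/Real.exp 1) * Real.sqrt 3 ^ m := by
      have h1 : Real.sqrt m * (m:ℝ) ≤ 2 * Real.sqrt 3 ^ m := by
        have hc : ((m:ℝ)) ^ 3 ≤ 4 * 3 ^ m := by exact_mod_cast cube_le_aux m
        have e1 : Real.sqrt ((m:ℝ)^3) = Real.sqrt m * (m:ℝ) := by
          rw [show ((m:ℝ))^3 = (m:ℝ)^2 * m by ring, Real.sqrt_mul (by positivity),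
            Real.sqrt_sq hm0.le]
          ring
        have e2 : Real.sqrt (4 * 3^m : ℝ) = 2 * Real.sqrt 3 ^ m := by
          rw [show (4 * 3^m : ℝ) = (2 * Real.sqrt 3 ^ m)^2 by
            rw [mul_pow, pow_right_comm, Real.sq_sqrt (by norm_num : (0:ℝ) ≤ 3)]; norm_num]
          exact Real.sqrt_sq (by positivity)
        rw [← e1, ← e2]
        exact Real.sqrt_le_sqrt hc
      have h2 : 2 * Real.exp 1 ≤ Real.sqrt (2*π) * (2 + 1/Real.exp 1) := by
        have hs : (5:ℝ)/2 ≤ Real.sqrt (2*π) := by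
          have hpi : (3.14:ℝ) ≤ π := by linarith [Real.pi_gt_d6]
          have : ((5:ℝ)/2)^2 ≤ 2*π := by nlinarith
          nlinarith [Real.sq_sqrt (by positivity : (0:ℝ) ≤ 2*π), Real.sqrt_nonneg (2*π)]
        have hei : (1:ℝ)/2.7182818286 ≤ 1/Real.exp 1 :=
          one_div_le_one_div_of_le he Real.exp_one_lt_d9.le
        have heu : Real.exp 1 < 2.7182818286 := Real.exp_one_lt_d9
        nlinarith
      calc Real.exp 1 * Real.sqrt m * (m:ℝ) = Real.exp 1 * (Real.sqrt m * (m:ℝ)) := by ring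
        _ ≤ Real.exp 1 * (2 * Real.sqrt 3 ^ m) := by
            exact mul_le_mul_of_nonneg_left h1 he.le
        _ = (2 * Real.exp 1) * Real.sqrt 3 ^ m := by ring
        _ ≤ Real.sqrt (2*π) * (2 + 1/Real.exp 1) * Real.sqrt 3 ^ m :=
            mul_le_mul_of_nonneg_right h2 (by positivity)
    have hmm : ((m:ℝ)/Real.exp 1) ^ m = (m:ℝ) * (m:ℝ)^(m-1) / Real.exp 1 ^ m := by
      rw [div_pow]
      congr 1
      rw [show (m:ℝ) * (m:ℝ)^(m-1) = (m:ℝ)^(m-1) * (m:ℝ) by ring, ← pow_succ,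
        Nat.sub_add_cancel hm]
    rw [hmm]
    rw [show Real.exp 1 * Real.sqrt m * ((m:ℝ) * (m:ℝ)^(m-1) / Real.exp 1 ^ m)
        = (Real.exp 1 * Real.sqrt m * (m:ℝ)) * ((m:ℝ)^(m-1) / Real.exp 1 ^ m) by ring,
      show Real.sqrt (2*π) * (2 + 1/Real.exp 1) * Real.sqrt 3 ^ m * (m:ℝ) ^ (m-1) / Real.exp 1 ^ m
        = (Real.sqrt (2*π) * (2 + 1/Real.exp 1) * Real.sqrt 3 ^ m) * ((m:ℝ)^(m-1) / Real.exp 1 ^ m) by ring]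
    exact mul_le_mul_of_nonneg_right hkey (by positivity)
  exact le_trans step1 (le_trans step2 step3)

theorem gaussian_measure_moment_bound_odd (n l : ℕ) (hn : 0 < n) (hnodd : Odd n)
    (β : ℝ) (hβ : 0 < β) (hl : 0 < l) (hleven : Even l) :
    ∫ ξ : EuclideanSpace ℝ (Fin n),
        ‖ξ‖ ^ l * ((π / β) ^ ((n : ℝ) / 2) * Real.exp (-‖ξ‖ ^ 2 / (4 * β))) ≤
      π ^ (((n : ℝ) + 1) / 2) * n *
        (volume (Metric.ball (0 : EuclideanSpace ℝ (Fin n)) 1)).toReal *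
        (2 : ℝ) ^ (((l : ℝ) + n + 2) / 2) *
        (Real.sqrt 3 / Real.exp 1) ^ (((l : ℝ) + n - 1) / 2) *
        β ^ ((l : ℝ) / 2) *
        ((l : ℝ) + n - 1) ^ (((l : ℝ) + n - 3) / 2) *
        (2 + 1 / Real.exp 1) := by
  have hπ := Real.pi_pos
  have he : (0:ℝ) < Real.exp 1 := Real.exp_pos 1
  obtain ⟨a, ha⟩ := hnodd
  obtain ⟨b, hb⟩ := hleven
  set m : ℕ := a + b with hmdef
  have hm : 1 ≤ m := by omega
  have hln : l + n = 2*m + 1 := by omega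
  have hlnR : (l:ℝ) + n = 2*(m:ℝ) + 1 := by exact_mod_cast hln
  haveI : NeZero n := ⟨hn.ne'⟩
  haveI : Nontrivial (EuclideanSpace ℝ (Fin n)) := inferInstance
  set α := (volume (Metric.ball (0 : EuclideanSpace ℝ (Fin n)) 1)).toReal with hα
  have hα0 : 0 ≤ α := ENNReal.toReal_nonneg
  -- integral in polar form
  have key := MeasureTheory.integral_fun_norm_addHaar
    (volume : Measure (EuclideanSpace ℝ (Fin n)))
    (fun r : ℝ => r ^ l * ((π / β) ^ ((n : ℝ) / 2) * Real.exp (-r ^ 2 / (4 * β))))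
  simp only [finrank_euclideanSpace_fin, smul_eq_mul, nsmul_eq_mul] at key
  -- evaluate the radial integral
  have hone : (∫ y in Set.Ioi (0:ℝ),
        y ^ (n-1) * (y ^ l * ((π / β) ^ ((n : ℝ) / 2) * Real.exp (-y ^ 2 / (4 * β)))) )
      = (π / β) ^ ((n : ℝ) / 2) *
        ((1/(4*β)) ^ (-(((2*m:ℕ):ℝ) + 1)/2) * (1/2) * Real.Gamma ((((2*m:ℕ):ℝ) + 1)/2)) := by
    have hcong : (∫ y in Set.Ioi (0:ℝ),
          y ^ (n-1) * (y ^ l * ((π / β) ^ ((n : ℝ) / 2) * Real.exp (-y ^ 2 / (4 * β)))) )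
        = ∫ y in Set.Ioi (0:ℝ),
          (π / β) ^ ((n : ℝ) / 2) * (y ^ (((2*m:ℕ)):ℝ) * Real.exp (-(1/(4*β)) * y ^ (2:ℝ))) := by
      refine setIntegral_congr_fun measurableSet_Ioi (fun y hy => ?_)
      have hy0 : (0:ℝ) < y := hy
      rw [Real.rpow_natCast, Real.rpow_two, show 2*m = (n-1) + l by omega, pow_add]
      rw [show -(1/(4*β)) * y^2 = -y^2/(4*β) by field_simp]
      ring
    rw [hcong, integral_const_mul,
      integral_rpow_mul_exp_neg_mul_rpow (by norm_num)
        (lt_of_lt_of_le neg_one_lt_zero (Nat.cast_nonneg _)) (by positivity)]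
  rw [hone] at key
  have hcast1 : ((((2*m:ℕ)):ℝ) + 1)/2 = (m:ℝ) + 1/2 := by push_cast; ring
  have hcast2 : -((((2*m:ℕ)):ℝ) + 1)/2 = -((m:ℝ) + 1/2) := by push_cast; ring
  rw [hcast1, hcast2] at key
  have hb4 : (0:ℝ) < 4*β := by linarith
  have hBinv : (1/(4*β)) ^ (-((m:ℝ) + 1/2)) = (4*β) ^ ((m:ℝ) + 1/2) := by
    rw [one_div, ← Real.rpow_neg_one, ← Real.rpow_mul hb4.le]
    ring_nf
  rw [hBinv] at key
  -- algebraic reshaping of the evaluated integral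
  have h4half : (4:ℝ) ^ ((1:ℝ)/2) = 2 := by
    rw [show (4:ℝ) = 2^(2:ℕ) by norm_num, ← Real.rpow_natCast 2 2,
      ← Real.rpow_mul (by norm_num)]
    norm_num
  have hX : (π / β) ^ ((n : ℝ) / 2) * ((4*β) ^ ((m:ℝ) + 1/2) * (1/2) * Real.Gamma ((m:ℝ) + 1/2))
      = π ^ ((n:ℝ)/2) * β ^ ((l:ℝ)/2) * 4 ^ m * Real.Gamma ((m:ℝ) + 1/2) := by
    have h1 : (4*β) ^ ((m:ℝ) + 1/2) = 4^m * β ^ ((m:ℝ) + 1/2) * 2 := by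
      rw [Real.mul_rpow (by norm_num) hβ.le, Real.rpow_add (by norm_num : (0:ℝ) < 4),
        Real.rpow_natCast, h4half]
      ring
    have h2 : β ^ ((m:ℝ) + 1/2) = β ^ ((l:ℝ)/2) * β ^ ((n:ℝ)/2) := by
      rw [← Real.rpow_add hβ]
      congr 1
      linarith
    have h3 : (π / β) ^ ((n : ℝ) / 2) = π ^ ((n:ℝ)/2) / β ^ ((n:ℝ)/2) :=
      Real.div_rpow hπ.le hβ.le _
    have hβn : (0:ℝ) < β ^ ((n:ℝ)/2) := Real.rpow_pos_of_pos hβ _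
    rw [h1, h2, h3]
    field_simp
  rw [hX] at key
  rw [key, measureReal_def, ← hα]
  -- rewrite the RHS
  have hrw1 : π ^ (((n:ℝ) + 1)/2) = π ^ ((n:ℝ)/2) * Real.sqrt π := by
    rw [Real.sqrt_eq_rpow, ← Real.rpow_add hπ]
    congr 1; ring
  have hrw2 : (2:ℝ) ^ (((l : ℝ) + n + 2) / 2) = 2^m * (2 * Real.sqrt 2) := by
    rw [show ((l : ℝ) + n + 2) / 2 = (m:ℝ) + (1 + 1/2) by rw [hlnR]; ring,
      Real.rpow_add (by norm_num : (0:ℝ) < 2), Real.rpow_add (by norm_num : (0:ℝ) < 2),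
      Real.rpow_natCast, Real.rpow_one, Real.sqrt_eq_rpow]
  have hrw3 : (Real.sqrt 3 / Real.exp 1) ^ (((l : ℝ) + n - 1) / 2)
      = Real.sqrt 3 ^ m / Real.exp 1 ^ m := by
    rw [show ((l : ℝ) + n - 1) / 2 = ((m:ℕ):ℝ) by rw [hlnR]; push_cast; ring,
      Real.rpow_natCast, div_pow]
  have hrw4 : ((l : ℝ) + n - 1) ^ (((l : ℝ) + n - 3) / 2) = 2^(m-1) * (m:ℝ)^(m-1) := by
    rw [show ((l : ℝ) + n - 3) / 2 = (((m-1:ℕ)):ℝ) by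
        rw [hlnR]; rw [Nat.cast_sub hm]; push_cast; ring,
      show ((l : ℝ) + n - 1) = 2*(m:ℝ) by rw [hlnR]; ring,
      Real.rpow_natCast, mul_pow]
  rw [hrw1, hrw2, hrw3, hrw4]
  -- reduce to the Gamma bound
  have hgam := gamma_half_le m hm
  have hpow4 : (4:ℝ)^m = 2^m * (2^(m-1) * 2) := by
    rw [← pow_succ, Nat.sub_add_cancel hm, ← mul_pow]
    norm_num
  have hsplit : Real.sqrt (2*π) = Real.sqrt 2 * Real.sqrt π :=
    Real.sqrt_mul (by norm_num) _
  calc (n:ℝ) * (α * (π ^ ((n:ℝ)/2) * β ^ ((l:ℝ)/2) * 4 ^ m * Real.Gamma ((m:ℝ) + 1/2)))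
      ≤ (n:ℝ) * (α * (π ^ ((n:ℝ)/2) * β ^ ((l:ℝ)/2) * 4 ^ m *
          (Real.sqrt (2*π) * (2 + 1/Real.exp 1) * Real.sqrt 3 ^ m * (m:ℝ) ^ (m-1)
            / Real.exp 1 ^ m))) := by
        have hpos : (0:ℝ) ≤ (n:ℝ) * (α * (π ^ ((n:ℝ)/2) * β ^ ((l:ℝ)/2) * 4 ^ m)) := by
          positivity
        gcongr
      _ = π ^ ((n:ℝ)/2) * Real.sqrt π * n * α * (2^m * (2 * Real.sqrt 2)) *
          (Real.sqrt 3 ^ m / Real.exp 1 ^ m) * β ^ ((l:ℝ)/2) * (2^(m-1) * (m:ℝ)^(m-1)) *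
          (2 + 1/Real.exp 1) := by
        rw [hsplit, hpow4]
        have : Real.exp 1 ^ m ≠ 0 := by positivity
        field_simp
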